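/- Fix 0 < a₀ < ⋯ < a_m and arbitrary constants γ₀, …, γ_m. The functions ρ ↦ arccos(aᵢ/ρ) + γᵢ, i = 0,…,m, are linearly independent on any nonempty open subinterval of (a_m, +∞). -/

import Mathlib

/-- Key lemma: the functions `x ↦ (1 - bᵢ x)^{-1/2}` (for injective `b`) are linearly
independent on any nonempty open interval where all `1 - bᵢ x` are positive. -/
lemma key_indep {n : ℕ} (b d : Fin n → ℝ) (hb : Function.Injective b) {u v : ℝ} (huv : u < v)
    (hpos : ∀ i : Fin n, ∀ x ∈ Set.Ioo u v, 0 < 1 - b i * x)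
    (hz : ∀ x ∈ Set.Ioo u v, ∑ i, d i * (1 - b i * x) ^ (-(1 : ℝ) / 2) = 0) :
    ∀ i, d i = 0 := by
  -- iterated derivatives: for every k,
  -- ∑ i, d i * b i ^ k * (1 - b i * x) ^ (-(k:ℝ) - 1/2) = 0 on the interval
  have hP : ∀ k : ℕ, ∀ x ∈ Set.Ioo u v,
      ∑ i, d i * b i ^ k * (1 - b i * x) ^ (-(k : ℝ) - 1 / 2) = 0 := by
    intro k
    induction k with
    | zero =>
      intro x hx
      have := hz x hx
      simp only [Nat.cast_zero, pow_zero, mul_one, neg_zero, zero_sub, neg_div] at this ⊢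
      exact this
    | succ k ih =>
      intro x hx
      set p : ℝ := -(k : ℝ) - 1 / 2 with hp
      -- each summand has a derivative
      have hterm : ∀ i : Fin n,
          HasDerivAt (fun y => d i * b i ^ k * (1 - b i * y) ^ p)
            (d i * b i ^ k * (p * (1 - b i * x) ^ (p - 1) * (-(b i)))) x := by
        intro i
        have h1 : HasDerivAt (fun y : ℝ => 1 - b i * y) (-(b i)) x := by
          simpa using ((hasDerivAt_id x).const_mul (b i)).const_sub (1 : ℝ)
        have h2 : HasDerivAt (fun y : ℝ => (1 - b i * y) ^ p)
            (p * (1 - b i * x) ^ (p - 1) * (-(b i))) x :=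
          by convert h1.rpow_const (p := p) (Or.inl (ne_of_gt (hpos i x hx))) using 1; ring
        exact h2.const_mul _
      have hsum : HasDerivAt (fun y => ∑ i, d i * b i ^ k * (1 - b i * y) ^ p)
          (∑ i, d i * b i ^ k * (p * (1 - b i * x) ^ (p - 1) * (-(b i)))) x :=
        HasDerivAt.fun_sum fun i _ => hterm i
      have hzero : HasDerivAt (fun y => ∑ i, d i * b i ^ k * (1 - b i * y) ^ p) 0 x := by
        have heq : (fun y => ∑ i, d i * b i ^ k * (1 - b i * y) ^ p) =ᶠ[nhds x]
            (fun _ => (0 : ℝ)) := by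
          filter_upwards [isOpen_Ioo.mem_nhds hx] with y hy using ih y hy
        exact (hasDerivAt_const x (0 : ℝ)).congr_of_eventuallyEq heq
      have hder : ∑ i, d i * b i ^ k * (p * (1 - b i * x) ^ (p - 1) * (-(b i))) = 0 :=
        hsum.unique hzero
      have hexp : p - 1 = -((k + 1 : ℕ) : ℝ) - 1 / 2 := by
        rw [hp]; push_cast; ring
      have hfac : ∑ i, d i * b i ^ k * (p * (1 - b i * x) ^ (p - 1) * (-(b i)))
          = (-p) * ∑ i, d i * b i ^ (k + 1) * (1 - b i * x) ^ (-((k + 1 : ℕ) : ℝ) - 1 / 2) := by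
        rw [Finset.mul_sum]
        refine Finset.sum_congr rfl fun i _ => ?_
        rw [← hexp]; ring
      have hpne : (-p) ≠ 0 := by rw [hp]; push_cast; intro h; nlinarith [Nat.cast_nonneg (α := ℝ) k]
      have := hder
      rw [hfac] at this
      exact (mul_eq_zero.mp this).resolve_left hpne
  -- evaluate at the midpoint and use Vandermonde
  set x₀ : ℝ := (u + v) / 2 with hx₀def
  have hx₀ : x₀ ∈ Set.Ioo u v := by constructor <;> (simp only [hx₀def]; linarith)
  have hw : ∀ i, 0 < 1 - b i * x₀ := fun i => hpos i x₀ hx₀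
  -- rewrite each relation in Vandermonde form
  have hvand : ∀ k : Fin n, ∑ i, (d i * (1 - b i * x₀) ^ (-(1 : ℝ) / 2))
      * (b i / (1 - b i * x₀)) ^ (k : ℕ) = 0 := by
    intro k
    have h1 := hP (k : ℕ) x₀ hx₀
    have : ∑ i, d i * b i ^ (k : ℕ) * (1 - b i * x₀) ^ (-((k : ℕ) : ℝ) - 1 / 2)
        = ∑ i, (d i * (1 - b i * x₀) ^ (-(1 : ℝ) / 2)) * (b i / (1 - b i * x₀)) ^ (k : ℕ) := by
      refine Finset.sum_congr rfl fun i _ => ?_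
      have hwi := hw i
      have e1 : (1 - b i * x₀) ^ (-((k : ℕ) : ℝ) - 1 / 2)
          = (1 - b i * x₀) ^ (-((k : ℕ) : ℝ)) * (1 - b i * x₀) ^ (-(1 : ℝ) / 2) := by
        rw [← Real.rpow_add hwi]; ring_nf
      have e2 : (1 - b i * x₀) ^ (-((k : ℕ) : ℝ)) = ((1 - b i * x₀) ^ (k : ℕ) : ℝ)⁻¹ := by
        rw [Real.rpow_neg hwi.le, Real.rpow_natCast]
      rw [e1, e2, div_pow]
      field_simp
    rw [this] at h1
    exact h1
  have hinj : Function.Injective (fun i => b i / (1 - b i * x₀)) := by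
    intro i j hij
    simp only at hij
    have hwi := hw i
    have hwj := hw j
    have : b i * (1 - b j * x₀) = b j * (1 - b i * x₀) := by
      rw [div_eq_div_iff hwi.ne' hwj.ne'] at hij
      linarith [hij]
    have hbij : b i = b j := by nlinarith
    exact hb hbij
  have hzero := Matrix.eq_zero_of_forall_pow_sum_mul_pow_eq_zero hinj hvand
  intro i
  have := congrFun hzero i
  simp only [Pi.zero_apply] at this
  have hwpos : (0 : ℝ) < (1 - b i * x₀) ^ (-(1 : ℝ) / 2) :=
    Real.rpow_pos_of_pos (hw i) _
  exact (mul_eq_zero.mp this).resolve_right (ne_of_gt hwpos)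

/-- For `0 < a₀ < ⋯ < a_m` and arbitrary constants `γ₀, …, γ_m`, the functions
`ρ ↦ arccos(aᵢ/ρ) + γᵢ` are linearly independent on any nonempty open subinterval
of `(a_m, +∞)`. -/
theorem stmt_14 {m : ℕ} (a : Fin (m + 1) → ℝ) (h0 : 0 < a 0) (hmono : StrictMono a)
    (γ : Fin (m + 1) → ℝ)
    (s t : ℝ) (hst : s < t) (hs : a (Fin.last m) ≤ s)
    (c : Fin (m + 1) → ℝ)
    (hzero : ∀ ρ ∈ Set.Ioo s t,
      ∑ i, c i * (Real.arccos (a i / ρ) + γ i) = 0) :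
    ∀ i, c i = 0 := by
  have hapos : ∀ i, 0 < a i := fun i => lt_of_lt_of_le h0 (hmono.monotone (Fin.zero_le i))
  have hale : ∀ i, a i ≤ s := fun i => le_trans (hmono.monotone (Fin.le_last i)) hs
  have hspos : 0 < s := lt_of_lt_of_le (hapos 0) (hale 0)
  have htpos : 0 < t := hspos.trans hst
  -- Step 1: differentiate to kill the constants γ.
  have hderiv : ∀ ρ ∈ Set.Ioo s t,
      ∑ i, c i * (-(1 / Real.sqrt (1 - (a i / ρ) ^ 2)) * (a i * -(ρ ^ 2)⁻¹)) = 0 := by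
    intro ρ hρ
    have hρpos : 0 < ρ := hspos.trans hρ.1
    have hfrac : ∀ i, 0 < a i / ρ ∧ a i / ρ < 1 := by
      intro i
      constructor
      · exact div_pos (hapos i) hρpos
      · rw [div_lt_one hρpos]; exact lt_of_le_of_lt (hale i) hρ.1
    have hterm : ∀ i : Fin (m + 1),
        HasDerivAt (fun y => c i * (Real.arccos (a i / y) + γ i))
          (c i * (-(1 / Real.sqrt (1 - (a i / ρ) ^ 2)) * (a i * -(ρ ^ 2)⁻¹))) ρ := by
      intro i
      have h1 : HasDerivAt (fun y : ℝ => a i / y) (a i * -(ρ ^ 2)⁻¹) ρ := by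
        have := (hasDerivAt_inv (ne_of_gt hρpos)).const_mul (a i)
        simpa [div_eq_mul_inv] using this
      have hne1 : a i / ρ ≠ -1 := by
        have := (hfrac i).1; intro h; rw [h] at this; linarith
      have hne2 : a i / ρ ≠ 1 := ne_of_lt (hfrac i).2
      have h2 : HasDerivAt (fun y => Real.arccos (a i / y))
          (-(1 / Real.sqrt (1 - (a i / ρ) ^ 2)) * (a i * -(ρ ^ 2)⁻¹)) ρ :=
        (Real.hasDerivAt_arccos hne1 hne2).comp ρ h1
      exact (h2.add_const (γ i)).const_mul (c i)
    have hsum : HasDerivAt (fun y => ∑ i, c i * (Real.arccos (a i / y) + γ i))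
        (∑ i, c i * (-(1 / Real.sqrt (1 - (a i / ρ) ^ 2)) * (a i * -(ρ ^ 2)⁻¹))) ρ :=
      HasDerivAt.fun_sum fun i _ => hterm i
    have hz : HasDerivAt (fun y => ∑ i, c i * (Real.arccos (a i / y) + γ i)) 0 ρ := by
      have heq : (fun y => ∑ i, c i * (Real.arccos (a i / y) + γ i)) =ᶠ[nhds ρ]
          (fun _ => (0 : ℝ)) := by
        filter_upwards [isOpen_Ioo.mem_nhds hρ] with y hy using hzero y hy
      exact (hasDerivAt_const ρ (0 : ℝ)).congr_of_eventuallyEq heq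
    exact hsum.unique hz
  -- Step 2: substitute x = 1/ρ², obtaining the hypothesis of the key lemma.
  have hkey : ∀ x ∈ Set.Ioo (1 / t ^ 2) (1 / s ^ 2),
      ∑ i, (c i * a i) * (1 - a i ^ 2 * x) ^ (-(1 : ℝ) / 2) = 0 := by
    intro x hx
    have hxpos : 0 < x := lt_trans (by positivity) hx.1
    set ρ : ℝ := 1 / Real.sqrt x with hρdef
    have hsx : 0 < Real.sqrt x := Real.sqrt_pos.mpr hxpos
    have hρpos : 0 < ρ := by positivity
    have hρsq : ρ ^ 2 = 1 / x := by
      rw [hρdef, div_pow, one_pow, Real.sq_sqrt hxpos.le]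
    have hρmem : ρ ∈ Set.Ioo s t := by
      have h1 : Real.sqrt x < 1 / s := by
        rw [Real.sqrt_lt' (by positivity)]
        calc x < 1 / s ^ 2 := hx.2
          _ = (1 / s) ^ 2 := by rw [div_pow, one_pow]
      have h2 : 1 / t < Real.sqrt x := by
        rw [Real.lt_sqrt (by positivity)]
        calc (1 / t) ^ 2 = 1 / t ^ 2 := by rw [div_pow, one_pow]
          _ < x := hx.1
      constructor
      · rw [hρdef, lt_div_iff₀ hsx]
        calc s * Real.sqrt x < s * (1 / s) := by
              exact mul_lt_mul_of_pos_left h1 hspos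
          _ = 1 := by field_simp
      · rw [hρdef, div_lt_iff₀ hsx]
        calc (1 : ℝ) = t * (1 / t) := by field_simp
          _ < t * Real.sqrt x := mul_lt_mul_of_pos_left h2 htpos
    have hxinv : (ρ ^ 2)⁻¹ = x := by rw [hρsq, one_div, inv_inv]
    have hwpos : ∀ i : Fin (m + 1), 0 < 1 - a i ^ 2 * x := by
      intro i
      have h2 : x * s ^ 2 < 1 := (lt_div_iff₀ (by positivity)).mp hx.2
      have h3 : a i ^ 2 ≤ s ^ 2 := by nlinarith [hapos i, hale i]
      have h4 : a i ^ 2 * x ≤ s ^ 2 * x := mul_le_mul_of_nonneg_right h3 hxpos.le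
      nlinarith
    have hD := hderiv ρ hρmem
    have htrans : ∑ i, c i * (-(1 / Real.sqrt (1 - (a i / ρ) ^ 2)) * (a i * -(ρ ^ 2)⁻¹))
        = x * ∑ i, (c i * a i) * (1 - a i ^ 2 * x) ^ (-(1 : ℝ) / 2) := by
      rw [Finset.mul_sum]
      refine Finset.sum_congr rfl fun i _ => ?_
      have hdivsq : (a i / ρ) ^ 2 = a i ^ 2 * x := by
        rw [div_pow, hρsq]
        field_simp
      have hrw : (1 - a i ^ 2 * x) ^ (-(1 : ℝ) / 2) = (Real.sqrt (1 - a i ^ 2 * x))⁻¹ := by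
        rw [show (-(1 : ℝ) / 2) = -(1 / 2 : ℝ) by ring, Real.rpow_neg (hwpos i).le,
          ← Real.sqrt_eq_rpow]
      rw [hdivsq, hxinv, hrw]
      ring
    rw [htrans] at hD
    exact (mul_eq_zero.mp hD).resolve_left (ne_of_gt hxpos)
  -- Step 3: apply the key lemma
  have hfinal : ∀ i, c i * a i = 0 := by
    apply key_indep (fun i => a i ^ 2) (fun i => c i * a i)
    · intro i j hij
      simp only at hij
      have : a i = a j := le_antisymm (by nlinarith [hapos i, hapos j])
        (by nlinarith [hapos i, hapos j])
      exact hmono.injective this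
    · show 1 / t ^ 2 < 1 / s ^ 2
      rw [div_lt_div_iff₀ (by positivity) (by positivity)]
      nlinarith
    · intro i x hx
      have hxpos : 0 < x := lt_trans (by positivity) hx.1
      have h2 : x * s ^ 2 < 1 := (lt_div_iff₀ (by positivity)).mp hx.2
      show 0 < 1 - a i ^ 2 * x
      have h3 : a i ^ 2 ≤ s ^ 2 := by nlinarith [hapos i, hale i]
      have h4 : a i ^ 2 * x ≤ s ^ 2 * x := mul_le_mul_of_nonneg_right h3 hxpos.le
      nlinarith
    · exact hkey
  intro i
  have := hfinal i
  rcases mul_eq_zero.mp this with h | h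
  · exact h
  · exact absurd h (ne_of_gt (hapos i))
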